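/- Let R be a right Ore domain and σ: R → Mₙ(R) a ring homomorphism such that for every nonzero a ∈ R the columns of σ(a) are right R-linearly independent. Then σ is megainjective, i.e., for every r ≥ 1 and nonzero a ∈ R, the columns of the iterate σ^{(r)}(a) ∈ M_{n^r}(R) are right R-linearly independent. -/

import Mathlib

/-- Index type for the `r`-fold iterate `σ^{(r)}`: `n^r` indices, realized as
`r`-tuples (words of length `r` in `n` letters). -/
def iterIndex (n : ℕ) : ℕ → Type
  | 0 => Unit
  | r + 1 => iterIndex n r × Fin n

instance iterIndexFintype (n : ℕ) : ∀ r : ℕ, Fintype (iterIndex n r)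
  | 0 => inferInstanceAs (Fintype Unit)
  | r + 1 => letI := iterIndexFintype n r
      inferInstanceAs (Fintype (iterIndex n r × Fin n))

instance iterIndexDecEq (n : ℕ) : ∀ r : ℕ, DecidableEq (iterIndex n r)
  | 0 => inferInstanceAs (DecidableEq Unit)
  | r + 1 => letI := iterIndexDecEq n r
      inferInstanceAs (DecidableEq (iterIndex n r × Fin n))

/-- The iterate `σ^{(r)} : R → M_{n^r}(R)`, defined by `σ^{(1)} = σ` (up to the
identification `iterIndex n 1 ≃ Fin n`) and `σ^{(r+1)}(a)` obtained by applying `σ`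
entrywise to `σ^{(r)}(a)`. -/
def sigmaIter {R : Type} [Ring R] {n : ℕ} (σ : R →+* Matrix (Fin n) (Fin n) R) :
    ∀ r : ℕ, R → Matrix (iterIndex n r) (iterIndex n r) R
  | 0 => fun a _ _ => a
  | r + 1 => fun a p q => σ (sigmaIter σ r a p.1 q.1) p.2 q.2

/-- `σ` is megainjective: for every nonzero `a ∈ R` and every `r ≥ 1`, the columns
of `σ^{(r)}(a)` are right `R`-linearly independent (equivalently, `σ^{(r)}(a)` is
neither zero nor a left zero divisor in `M_{n^r}(R)`). -/
def Megainjective {R : Type} [Ring R] {n : ℕ}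
    (σ : R →+* Matrix (Fin n) (Fin n) R) : Prop :=
  ∀ a : R, a ≠ 0 → ∀ r : ℕ, 1 ≤ r → ∀ b : iterIndex n r → R,
    (sigmaIter σ r a).mulVec b = 0 → b = 0

section Aux

variable {R : Type} [Ring R] [IsDomain R]

/-- Any `m+1` vectors in `R^m` over a right Ore domain are right linearly dependent. -/
lemma dep_aux (hOre : ∀ a b : R, a ≠ 0 → b ≠ 0 → ∃ u v : R, a * u = b * v ∧ a * u ≠ 0) :
    ∀ (m : ℕ) (v : Fin (m+1) → Fin m → R),
      ∃ c : Fin (m+1) → R, c ≠ 0 ∧ ∀ j, ∑ i, v i j * c i = 0 := by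
  intro m
  induction m with
  | zero =>
    intro v
    exact ⟨fun _ => 1, fun h => one_ne_zero (congrFun h 0), fun j => j.elim0⟩
  | succ m ih =>
    -- first prove the pivoted version
    have pivot : ∀ (w : Fin (m+2) → Fin (m+1) → R), w 0 (Fin.last m) ≠ 0 →
        ∃ c : Fin (m+2) → R, c ≠ 0 ∧ ∀ j, ∑ i, w i j * c i = 0 := by
      intro w hw0
      have h : ∀ i : Fin (m+1), ∃ p : R × R,
          w 0 (Fin.last m) * p.1 = w i.succ (Fin.last m) * p.2 ∧ p.2 ≠ 0 := by
        intro i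
        by_cases hc : w i.succ (Fin.last m) = 0
        · exact ⟨(0, 1), by simp [hc], one_ne_zero⟩
        · obtain ⟨u, t, huv, hne⟩ := hOre _ _ hw0 hc
          refine ⟨(u, t), huv, fun ht => hne ?_⟩
          rw [huv, show t = (0:R) from ht, mul_zero]
      choose p hp hpne using h
      obtain ⟨c', hc', hrel⟩ := ih
        (fun i j => w 0 j.castSucc * (p i).1 - w i.succ j.castSucc * (p i).2)
      have hfull : ∀ j : Fin (m+1),
          ∑ i : Fin (m+1), (w 0 j * (p i).1 - w i.succ j * (p i).2) * c' i = 0 := by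
        intro j
        refine Fin.lastCases ?_ ?_ j
        · apply Finset.sum_eq_zero
          intro i _
          rw [hp i, sub_self, zero_mul]
        · intro j'
          exact hrel j'
      refine ⟨Fin.cons (∑ i, (p i).1 * c' i) (fun i => -((p i).2 * c' i)), ?_, ?_⟩
      · obtain ⟨i, hi⟩ := Function.ne_iff.mp hc'
        intro h
        have := congrFun h i.succ
        simp only [Fin.cons_succ, Pi.zero_apply, neg_eq_zero] at this
        exact (mul_ne_zero (hpne i) hi) this
      · intro j
        have key := hfull j
        simp only [sub_mul, mul_assoc, Finset.sum_sub_distrib, ← Finset.mul_sum] at key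
        rw [Fin.sum_univ_succ]
        simp only [Fin.cons_zero, Fin.cons_succ, mul_neg, mul_assoc]
        rw [Finset.sum_neg_distrib, ← sub_eq_add_neg]
        exact key
    intro v
    by_cases hall : ∀ i, v i (Fin.last m) = 0
    · obtain ⟨c', hc', hrel⟩ := ih (fun i j => v i.castSucc j.castSucc)
      refine ⟨Fin.snoc c' 0, ?_, ?_⟩
      · obtain ⟨i, hi⟩ := Function.ne_iff.mp hc'
        intro h
        have := congrFun h i.castSucc
        simp only [Fin.snoc_castSucc, Pi.zero_apply] at this
        exact hi this
      · intro j
        refine Fin.lastCases ?_ ?_ j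
        · apply Finset.sum_eq_zero
          intro i _
          rw [hall i, zero_mul]
        · intro j'
          rw [Fin.sum_univ_castSucc]
          simp only [Fin.snoc_castSucc, Fin.snoc_last, mul_zero, add_zero]
          exact hrel j'
    · push_neg at hall
      obtain ⟨i₀, hi₀⟩ := hall
      have hw0 : v (Equiv.swap (0 : Fin (m+2)) i₀ 0) (Fin.last m) ≠ 0 := by
        rwa [Equiv.swap_apply_left]
      obtain ⟨c, hc, hrel⟩ := pivot (fun i => v (Equiv.swap 0 i₀ i)) hw0
      refine ⟨c ∘ (Equiv.swap 0 i₀), ?_, ?_⟩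
      · intro h
        apply hc
        funext i
        have := congrFun h ((Equiv.swap (0 : Fin (m+2)) i₀) i)
        simpa [Equiv.swap_apply_self] using this
      · intro j
        have := hrel j
        rw [← this]
        refine Fintype.sum_equiv (Equiv.swap 0 i₀) _ _ ?_
        intro i
        simp [Equiv.swap_apply_self]

/-- Dependence for `card ι + 1` vectors indexed by `Option ι`. -/
lemma dep_gen (hOre : ∀ a b : R, a ≠ 0 → b ≠ 0 → ∃ u v : R, a * u = b * v ∧ a * u ≠ 0)
    (ι : Type) [Fintype ι] (v : Option ι → ι → R) :
    ∃ c : Option ι → R, c ≠ 0 ∧ ∀ j, ∑ i, v i j * c i = 0 := by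
  classical
  set m := Fintype.card ι with hm
  let e : ι ≃ Fin m := Fintype.equivFin ι
  let e' : Option ι ≃ Fin (m+1) := (Equiv.optionCongr e).trans (finSuccEquiv m).symm
  obtain ⟨c'', hc'', hrel⟩ := dep_aux hOre m (fun i j => v (e'.symm i) (e.symm j))
  refine ⟨fun o => c'' (e' o), ?_, ?_⟩
  · intro h
    apply hc''
    funext i
    have := congrFun h (e'.symm i)
    simpa using this
  · intro j
    have key := hrel (e j)
    rw [← key]
    refine Fintype.sum_equiv e' _ _ ?_
    intro o
    simp

/-- A square matrix with right-independent columns has a right inverse up to a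
diagonal with nonzero entries. -/
lemma right_inv_diag (hOre : ∀ a b : R, a ≠ 0 → b ≠ 0 → ∃ u v : R, a * u = b * v ∧ a * u ≠ 0)
    {ι : Type} [Fintype ι] [DecidableEq ι] (M : Matrix ι ι R)
    (hM : ∀ x : ι → R, M.mulVec x = 0 → x = 0) :
    ∃ (N : Matrix ι ι R) (d : ι → R), (∀ i, d i ≠ 0) ∧ M * N = Matrix.diagonal d := by
  have h : ∀ i : ι, ∃ c : Option ι → R, c none ≠ 0 ∧
      ∀ j, (if j = i then (1:R) else 0) * c none + ∑ q, M j q * c (some q) = 0 := by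
    intro i
    obtain ⟨c, hc, hrel⟩ := dep_gen hOre ι
      (fun o j => Option.elim o (if j = i then (1:R) else 0) (fun q => M j q))
    have hrel' : ∀ j, (if j = i then (1:R) else 0) * c none + ∑ q, M j q * c (some q) = 0 := by
      intro j
      have := hrel j
      rwa [Fintype.sum_option] at this
    refine ⟨c, ?_, hrel'⟩
    intro hnone
    apply hc
    have hker : M.mulVec (fun q => c (some q)) = 0 := by
      funext j
      have := hrel' j
      rw [hnone, mul_zero, zero_add] at this
      exact this
    have := hM _ hker
    funext o
    cases o with
    | none => exact hnone
    | some q => exact congrFun this q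
  choose c hcne hcrel using h
  refine ⟨fun q i => -(c i (some q)), fun i => c i none, hcne, ?_⟩
  ext j i
  have hv : ∑ q, M j q * c i (some q) = -((if j = i then (1:R) else 0) * c i none) :=
    eq_neg_of_add_eq_zero_right (hcrel i j)
  show ∑ q, M j q * -(c i (some q)) = Matrix.diagonal (fun i => c i none) j i
  rw [Matrix.diagonal_apply]
  calc ∑ q, M j q * -(c i (some q))
      = -∑ q, M j q * c i (some q) := by
        rw [← Finset.sum_neg_distrib]; congr 1; funext q; rw [mul_neg]
    _ = (if j = i then (1:R) else 0) * c i none := by rw [hv, neg_neg]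
    _ = if j = i then c j none else 0 := by by_cases h : j = i <;> simp [h]

end Aux

section Aux2
variable {R : Type} [Ring R] [IsDomain R]

/-- Kernel transfer: if `A * B = D` with `D` column-independent, then `A` is
column-independent. -/
lemma ker_transfer (hOre : ∀ a b : R, a ≠ 0 → b ≠ 0 → ∃ u v : R, a * u = b * v ∧ a * u ≠ 0)
    {ι : Type} [Fintype ι] (A B D : Matrix ι ι R) (hAB : A * B = D)
    (hD : ∀ x : ι → R, D.mulVec x = 0 → x = 0)
    (b : ι → R) (hb : A.mulVec b = 0) : b = 0 := by
  obtain ⟨c, hc, hrel⟩ := dep_gen hOre ι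
    (fun o j => Option.elim o (b j) (fun q => B j q))
  have hrel' : ∀ j, b j * c none + B.mulVec (fun q => c (some q)) j = 0 := by
    intro j
    have := hrel j
    rw [Fintype.sum_option] at this
    exact this
  have hy : A.mulVec (fun j => b j * c none + B.mulVec (fun q => c (some q)) j) = 0 := by
    have : (fun j => b j * c none + B.mulVec (fun q => c (some q)) j) = (0 : ι → R) := by
      funext j; exact hrel' j
    rw [this, Matrix.mulVec_zero]
  have hsplit : A.mulVec (fun j => b j * c none + B.mulVec (fun q => c (some q)) j)
      = (fun i => A.mulVec b i * c none) + D.mulVec (fun q => c (some q)) := by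
    funext i
    simp only [Matrix.mulVec, dotProduct, Pi.add_apply, mul_add, Finset.sum_add_distrib,
      ← mul_assoc, ← Finset.sum_mul]
    congr 1
    rw [← hAB]
    simp only [Matrix.mul_apply, Finset.sum_mul, Finset.mul_sum, mul_assoc]
    rw [Finset.sum_comm]
  have hDker : D.mulVec (fun q => c (some q)) = 0 := by
    rw [hsplit] at hy
    have hb0 : (fun i => A.mulVec b i * c none) = (0 : ι → R) := by
      funext i
      rw [show A.mulVec b i = 0 from congrFun hb i, zero_mul]
      rfl
    rw [hb0, zero_add] at hy
    exact hy
  have hcs : (fun q => c (some q)) = (0 : ι → R) := hD _ hDker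
  have hnone : c none ≠ 0 := by
    intro h0
    apply hc
    funext o
    cases o with
    | none => exact h0
    | some q => exact congrFun hcs q
  funext j
  have := hrel' j
  rw [show B.mulVec (fun q => c (some q)) j = 0 by rw [hcs, Matrix.mulVec_zero]; rfl,
    add_zero] at this
  exact (mul_eq_zero.mp this).resolve_right hnone

end Aux2


/-- If `R` is a right Ore domain and the columns of `σ(a)` are right `R`-linearly
independent for every nonzero `a ∈ R`, then `σ` is megainjective: for every
`r ≥ 1` and nonzero `a`, the columns of `σ^{(r)}(a)` are right `R`-linearly
independent. -/
theorem megainjective_of_rightOre {R : Type} [Ring R] [IsDomain R] {n : ℕ}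
    (hOre : ∀ a b : R, a ≠ 0 → b ≠ 0 → ∃ u v : R, a * u = b * v ∧ a * u ≠ 0)
    (σ : R →+* Matrix (Fin n) (Fin n) R)
    (hcols : ∀ a : R, a ≠ 0 → ∀ b : Fin n → R, (σ a).mulVec b = 0 → b = 0) :
    Megainjective σ := by
  intro a ha r _hr
  have H : ∀ r : ℕ, ∀ b : iterIndex n r → R, (sigmaIter σ r a).mulVec b = 0 → b = 0 := by
    intro r
    induction r with
    | zero =>
      intro b hb
      letI : Unique (iterIndex n 0) := inferInstanceAs (Unique Unit)
      funext u
      have h := congrFun hb u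
      simp only [Matrix.mulVec, dotProduct, sigmaIter] at h
      rw [Fintype.sum_unique] at h
      have := (mul_eq_zero.mp h).resolve_left ha
      rw [Unique.eq_default u]
      exact this
    | succ r ih =>
      intro b hb
      obtain ⟨N, d, hd, hMN⟩ := right_inv_diag hOre (sigmaIter σ r a) ih
      let A : Matrix (iterIndex n r × Fin n) (iterIndex n r × Fin n) R := sigmaIter σ (r+1) a
      let B' : Matrix (iterIndex n r × Fin n) (iterIndex n r × Fin n) R :=
        fun pq st => σ (N pq.1 st.1) pq.2 st.2
      let D' : Matrix (iterIndex n r × Fin n) (iterIndex n r × Fin n) R :=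
        fun pq st => σ (Matrix.diagonal d pq.1 st.1) pq.2 st.2
      have hAB : A * B' = D' := by
        ext ⟨p, i⟩ ⟨q, j⟩
        rw [Matrix.mul_apply, Fintype.sum_prod_type]
        calc ∑ s, ∑ k, A (p, i) (s, k) * B' (s, k) (q, j)
            = ∑ s, (σ (sigmaIter σ r a p s * N s q)) i j := by
              refine Finset.sum_congr rfl ?_
              intro s _
              rw [map_mul, Matrix.mul_apply]
              rfl
          _ = σ (∑ s, sigmaIter σ r a p s * N s q) i j := by
              rw [map_sum, Matrix.sum_apply]
          _ = σ ((sigmaIter σ r a * N) p q) i j := by rw [Matrix.mul_apply]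
          _ = D' (p, i) (q, j) := by rw [hMN]
      have hDker : ∀ x : iterIndex n r × Fin n → R, D'.mulVec x = 0 → x = 0 := by
        intro x hx
        have hblock : ∀ q : iterIndex n r, (fun j => x (q, j)) = (0 : Fin n → R) := by
          intro q
          apply hcols (d q) (hd q)
          funext i
          have h := congrFun hx (q, i)
          simp only [Matrix.mulVec, dotProduct, Pi.zero_apply] at h ⊢
          rw [Fintype.sum_prod_type] at h
          rw [Finset.sum_eq_single q (fun s _ hsq => Finset.sum_eq_zero fun k _ => by
              simp only [D', Matrix.diagonal_apply_ne' d hsq, map_zero, Matrix.zero_apply,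
                zero_mul])
            (fun hq => absurd (Finset.mem_univ q) hq)] at h
          rw [← h]
          exact Finset.sum_congr rfl fun k _ => by simp only [D', Matrix.diagonal_apply_eq]
        funext qj
        exact congrFun (hblock qj.1) qj.2
      exact ker_transfer hOre A B' D' hAB hDker b hb
  exact H r
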